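/- arXiv:1612.04504 — 3 statements merged into one kernel-verified Lean document; each statement's English description precedes it below -/
import Mathlib

section
/- Let ω : Fin n → ℂ with |ω(J)| = 1 for all J, let c : Fin n → ℝ be strictly positive with ∑ J, c(J) = 1, and suppose n ≥ 2. Then it is impossible that both |∑ J, ω(J) * c(J)| = 1 and |∑ J, (-1)^J * ω(J) * c(J)| = 1 hold simultaneously. -/
lemma rigid (n : ℕ) (ω : Fin n → ℂ) (c : Fin n → ℝ)
    (hω : ∀ J, ‖ω J‖ = 1)
    (hc : ∀ J, 0 < c J) (hsum : ∑ J, c J = 1)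
    (h : ‖∑ J, ω J * (c J : ℂ)‖ = 1) :
    ∀ J, ω J = ∑ J, ω J * (c J : ℂ) := by
  set S : ℂ := ∑ J, ω J * (c J : ℂ) with hS
  have hnS : Complex.normSq S = 1 := by
    have := Complex.sq_norm S
    rw [h] at this; simpa using this.symm
  have hcS : (starRingEnd ℂ) S * S = 1 := by
    rw [mul_comm, Complex.mul_conj, hnS]; norm_num
  have hle : ∀ J, ((starRingEnd ℂ) S * ω J).re ≤ 1 := by
    intro J
    have h1 : ‖(starRingEnd ℂ) S * ω J‖ = 1 := by
      rw [norm_mul, Complex.norm_conj, h, hω, one_mul]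
    calc ((starRingEnd ℂ) S * ω J).re ≤ ‖(starRingEnd ℂ) S * ω J‖ :=
          Complex.re_le_norm _
      _ = 1 := h1
  have hsum2 : ∑ J, c J * (1 - ((starRingEnd ℂ) S * ω J).re) = 0 := by
    have : ∑ J, c J * ((starRingEnd ℂ) S * ω J).re = ((starRingEnd ℂ) S * S).re := by
      rw [hS, Finset.mul_sum, Complex.re_sum]
      refine Finset.sum_congr rfl fun J _ => ?_
      rw [← mul_assoc]
      simp [Complex.mul_re]
      ring
    simp only [mul_sub, mul_one]
    rw [Finset.sum_sub_distrib, this, hcS, hsum]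
    norm_num
  have heq : ∀ J, ((starRingEnd ℂ) S * ω J).re = 1 := by
    intro J
    have hz := (Finset.sum_eq_zero_iff_of_nonneg (fun J _ =>
      mul_nonneg (hc J).le (by linarith [hle J]))).mp hsum2 J (Finset.mem_univ J)
    have := mul_eq_zero.mp hz
    rcases this with h' | h'
    · exact absurd h' (hc J).ne'
    · linarith
  intro J
  have h1 : ‖(starRingEnd ℂ) S * ω J‖ = 1 := by
    rw [norm_mul, Complex.norm_conj, h, hω, one_mul]
  have him : ((starRingEnd ℂ) S * ω J).im = 0 := by
    have h2 := Complex.sq_norm ((starRingEnd ℂ) S * ω J)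
    rw [h1, Complex.normSq_apply, heq J] at h2
    have : ((starRingEnd ℂ) S * ω J).im * ((starRingEnd ℂ) S * ω J).im = 0 := by nlinarith
    exact mul_self_eq_zero.mp this
  have hval : (starRingEnd ℂ) S * ω J = 1 := by
    apply Complex.ext <;> simp [heq J, him]
  calc ω J = ((starRingEnd ℂ) S * S) * ω J := by rw [hcS, one_mul]
    _ = S * ((starRingEnd ℂ) S * ω J) := by ring
    _ = S := by rw [hval, mul_one]

theorem stmt_1 (n : ℕ) (hn : 2 ≤ n) (ω : Fin n → ℂ) (c : Fin n → ℝ)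
    (hω : ∀ J, ‖ω J‖ = 1)
    (hc : ∀ J, 0 < c J) (hsum : ∑ J, c J = 1) :
    ¬ (‖∑ J, ω J * (c J : ℂ)‖ = 1 ∧
       ‖∑ J : Fin n, (-1 : ℂ) ^ (J : ℕ) * ω J * (c J : ℂ)‖ = 1) := by
  rintro ⟨h1, h2⟩
  have r1 := rigid n ω c hω hc hsum h1
  have r2 := rigid n (fun J => (-1 : ℂ) ^ (J : ℕ) * ω J) c
    (fun J => by simp [hω J]) hc hsum h2
  have h0 : (0 : ℕ) < n := by omega
  have h1' : (1 : ℕ) < n := by omega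
  have e0 := r2 ⟨0, h0⟩
  have e1 := r2 ⟨1, h1'⟩
  simp only at e0 e1
  have eω0 := r1 ⟨0, h0⟩
  have eω1 := r1 ⟨1, h1'⟩
  -- ω 0 = S, ω 1 = S, e0: ω 0 = T, e1: - ω 1 = T
  have : ω ⟨0, h0⟩ = - ω ⟨1, h1'⟩ := by
    have ht := e0.trans e1.symm
    simpa using ht
  rw [eω0, eω1] at this
  have hSne : (∑ J, ω J * (c J : ℂ)) ≠ 0 := by
    intro h; rw [h] at h1; simp at h1
  have : (∑ J, ω J * (c J : ℂ)) = 0 := by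
    have := this; linear_combination this / 2
  exact hSne this
end

section
/- There is no unit vector ψ ∈ ℂ² ⊗ ℂ² ⊗ ℂ² ⊗ ℂ² such that for every 2-element subset S of the four tensor factors, the reduced density matrix obtained by tracing out the complement of S equals (1/4)·I₄. -/
/-- The reduced density matrix of the 4-valent tensor `ψ` on the two tensor
factors `i, j` (tracing out the other two factors). -/
noncomputable def redMat {A : Type*} [Fintype A] [DecidableEq A]
    (ψ : (Fin 4 → A) → ℂ) (i j : Fin 4) : Matrix (A × A) (A × A) ℂ :=
  fun p q => ∑ v : Fin 4 → A,
    if v i = p.1 ∧ v j = p.2 then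
      ψ v * (starRingEnd ℂ) (ψ (Function.update (Function.update v i q.1) j q.2))
    else 0

namespace AME4

open Finset

/-- merge: take `a` on `T`, `b` elsewhere -/
def mg (T : Finset (Fin 4)) (a b : Fin 4 → Fin 2) : Fin 4 → Fin 2 :=
  fun i => if i ∈ T then a i else b i

noncomputable def Q (ψ : (Fin 4 → Fin 2) → ℂ) (T : Finset (Fin 4)) : ℂ :=
  ∑ v, ∑ x, ψ v * ψ x * (starRingEnd ℂ) (ψ (mg T x v)) * (starRingEnd ℂ) (ψ (mg T v x))

noncomputable def sgn (v : Fin 4 → Fin 2) : ℂ := ∏ i, if v i = 0 then 1 else -1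

def flipv (v : Fin 4 → Fin 2) : Fin 4 → Fin 2 := fun i => v i + 1

noncomputable def S (ψ : (Fin 4 → Fin 2) → ℂ) : ℂ := ∑ v, sgn v * ψ v * ψ (flipv v)

lemma mg_empty (a b : Fin 4 → Fin 2) : mg ∅ a b = b := by
  funext k; simp [mg]

lemma mg_univ (a b : Fin 4 → Fin 2) : mg univ a b = a := by
  funext k; simp [mg]

lemma mg_compl (T : Finset (Fin 4)) (a b : Fin 4 → Fin 2) : mg Tᶜ a b = mg T b a := by
  funext k; simp only [mg, mem_compl]; by_cases h : k ∈ T <;> simp [h]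

lemma mg_singleton (i : Fin 4) (a b : Fin 4 → Fin 2) :
    mg {i} a b = Function.update b i (a i) := by
  funext k
  by_cases h : k = i <;> simp [mg, Function.update_apply, h]

lemma mg_pair {i j : Fin 4} (hij : i ≠ j) (a b : Fin 4 → Fin 2) :
    mg {i, j} a b = Function.update (Function.update b i (a i)) j (a j) := by
  funext k
  by_cases h : k = j
  · subst h; simp [mg, Function.update_apply]
  · by_cases h2 : k = i
    · subst h2; simp [mg, Function.update_apply, h, hij]
    · simp [mg, Function.update_apply, h, h2]

lemma mg_flip (v : Fin 4 → Fin 2) (T : Finset (Fin 4)) :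
    mg T v (flipv v) = flipv (mg T (flipv v) v) := by
  funext k
  have h2 : ∀ a : Fin 2, a + 1 + 1 = a := by decide
  by_cases h : k ∈ T <;> simp [mg, flipv, h, h2]

/-- If `v i = x i` for some `i`, the signed sum over subsets cancels. -/
lemma cancel (g : (Fin 4 → Fin 2) → ℂ) (v x : Fin 4 → Fin 2) (i : Fin 4)
    (hvx : v i = x i) :
    ∑ T : Finset (Fin 4), (-1 : ℂ) ^ T.card * (g (mg T x v) * g (mg T v x)) = 0 := by
  have huniv : (univ : Finset (Finset (Fin 4))) = (insert i (univ.erase i)).powerset := by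
    rw [insert_erase (mem_univ i), powerset_univ]
  rw [huniv, sum_powerset_insert (notMem_erase i univ), ← Finset.sum_add_distrib]
  apply Finset.sum_eq_zero
  intro t ht
  have hit : i ∉ t := fun h => (notMem_erase i univ) (mem_powerset.1 ht h)
  have hc : (insert i t).card = t.card + 1 := card_insert_of_notMem hit
  have h1 : mg (insert i t) x v = mg t x v := by
    funext k
    by_cases h : k = i
    · subst h; simp [mg, hit, hvx]
    · simp [mg, mem_insert, h]
  have h2 : mg (insert i t) v x = mg t v x := by
    funext k
    by_cases h : k = i
    · subst h; simp [mg, hit, hvx]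
    · simp [mg, mem_insert, h]
  rw [h1, h2, hc, pow_succ]
  ring

lemma sgn_mul_sgn_mg (v : Fin 4 → Fin 2) (T : Finset (Fin 4)) :
    sgn v * sgn (mg T (flipv v) v) = (-1 : ℂ) ^ T.card := by
  have key : ∀ a : Fin 2, ((if a = 0 then (1 : ℂ) else -1) *
      if a + 1 = 0 then (1 : ℂ) else -1) = -1 := by
    intro a; fin_cases a <;> norm_num [show (1:Fin 2)+1 = 0 from rfl, show (0:Fin 2)+1 = 1 from rfl]
  have key2 : ∀ a : Fin 2, ((if a = 0 then (1 : ℂ) else -1) *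
      if a = 0 then (1 : ℂ) else -1) = 1 := by
    intro a; fin_cases a <;> norm_num
  rw [sgn, sgn, ← Finset.prod_mul_distrib]
  have : ∀ k ∈ univ, ((if v k = 0 then (1:ℂ) else -1) *
      if (mg T (flipv v) v) k = 0 then (1:ℂ) else -1) = if k ∈ T then (-1:ℂ) else 1 := by
    intro k _
    by_cases h : k ∈ T <;> simp only [mg, flipv, h, if_true, if_false, key, key2]
  rw [Finset.prod_congr rfl this, Finset.prod_ite_mem, univ_inter, Finset.prod_const]

/-- The bijection `T ↦ mg T (flipv v) v` between subsets and bit strings. -/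
lemma mg_bijective (v : Fin 4 → Fin 2) :
    Function.Bijective (fun T : Finset (Fin 4) => mg T (flipv v) v) := by
  rw [Fintype.bijective_iff_injective_and_card]
  constructor
  · intro T T' h
    ext k
    have hk := congrFun h k
    simp only [mg, flipv] at hk
    have hne : v k + 1 ≠ v k := by
      have : ∀ a : Fin 2, a + 1 ≠ a := by decide
      exact this _
    by_cases h1 : k ∈ T <;> by_cases h2 : k ∈ T' <;>
      simp only [h1, h2, if_true, if_false] at hk ⊢ <;> tauto
  · simp

lemma conj_S (ψ : (Fin 4 → Fin 2) → ℂ) :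
    (starRingEnd ℂ) (S ψ) =
      ∑ u, sgn u * ((starRingEnd ℂ) (ψ u) * (starRingEnd ℂ) (ψ (flipv u))) := by
  rw [S, map_sum]
  apply Finset.sum_congr rfl
  intro u _
  have hsgn : (starRingEnd ℂ) (sgn u) = sgn u := by
    rw [sgn, map_prod]
    apply Finset.prod_congr rfl
    intro k _
    by_cases h : u k = 0 <;> simp [h]
  rw [map_mul, map_mul, hsgn]; ring

/-- Key identity: the alternating sum of `Q` over all subsets is `|S ψ|²`. -/
lemma key_identity (ψ : (Fin 4 → Fin 2) → ℂ) :
    ∑ T : Finset (Fin 4), (-1 : ℂ) ^ T.card * Q ψ T = S ψ * (starRingEnd ℂ) (S ψ) := by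
  have swap : ∑ T : Finset (Fin 4), (-1 : ℂ) ^ T.card * Q ψ T
      = ∑ v, ∑ x, ψ v * ψ x * ∑ T : Finset (Fin 4), (-1 : ℂ) ^ T.card *
          ((starRingEnd ℂ) (ψ (mg T x v)) * (starRingEnd ℂ) (ψ (mg T v x))) := by
    simp only [Q, Finset.mul_sum]
    rw [Finset.sum_comm]
    refine Finset.sum_congr rfl fun v _ => ?_
    rw [Finset.sum_comm]
    refine Finset.sum_congr rfl fun x _ => ?_
    exact Finset.sum_congr rfl fun T _ => by ring
  rw [swap]
  have inner : ∀ v : Fin 4 → Fin 2,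
      (∑ x, ψ v * ψ x * ∑ T : Finset (Fin 4), (-1 : ℂ) ^ T.card *
          ((starRingEnd ℂ) (ψ (mg T x v)) * (starRingEnd ℂ) (ψ (mg T v x))))
      = sgn v * ψ v * ψ (flipv v) * (starRingEnd ℂ) (S ψ) := by
    intro v
    rw [Finset.sum_eq_single_of_mem (flipv v) (mem_univ _)]
    · have hb := Fintype.sum_bijective _ (mg_bijective v)
        (fun T : Finset (Fin 4) => (-1 : ℂ) ^ T.card *
          ((starRingEnd ℂ) (ψ (mg T (flipv v) v)) * (starRingEnd ℂ) (ψ (mg T v (flipv v)))))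
        (fun u => sgn v * (sgn u * ((starRingEnd ℂ) (ψ u) * (starRingEnd ℂ) (ψ (flipv u)))))
        (by
          intro T
          rw [mg_flip, ← sgn_mul_sgn_mg v T]
          ring)
      rw [hb, ← Finset.mul_sum, ← conj_S]
      ring
    · intro x _ hx
      have hex : ∃ i, v i = x i := by
        by_contra hno
        push_neg at hno
        apply hx
        funext i
        have : ∀ a b : Fin 2, b ≠ a → a = b + 1 := by decide
        exact this _ _ (hno i)
      obtain ⟨i, hi⟩ := hex
      have hc := cancel (fun u => (starRingEnd ℂ) (ψ u)) v x i hi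
      rw [hc]
      ring
  rw [Finset.sum_congr rfl fun v _ => inner v, S, Finset.sum_mul]

lemma Q_empty (ψ : (Fin 4 → Fin 2) → ℂ) (hnorm : ∑ v, ‖ψ v‖ ^ 2 = 1) :
    Q ψ ∅ = 1 := by
  have h1 : ∑ v, ψ v * (starRingEnd ℂ) (ψ v) = 1 := by
    simp only [Complex.mul_conj]
    rw [← Complex.ofReal_sum]
    rw [show ∑ v, Complex.normSq (ψ v) = ∑ v, ‖ψ v‖ ^ 2 from
      Finset.sum_congr rfl fun v _ => (Complex.sq_norm _).symm, hnorm]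
    norm_num
  have : Q ψ ∅ = (∑ v, ψ v * (starRingEnd ℂ) (ψ v)) * (∑ x, ψ x * (starRingEnd ℂ) (ψ x)) := by
    rw [Finset.sum_mul_sum]
    simp only [Q, mg_empty]
    exact Finset.sum_congr rfl fun v _ => Finset.sum_congr rfl fun x _ => by ring
  rw [this, h1, one_mul]

lemma Q_univ (ψ : (Fin 4 → Fin 2) → ℂ) :
    Q ψ univ = Q ψ ∅ := by
  simp only [Q, mg_empty, mg_univ]
  exact Finset.sum_congr rfl fun v _ => Finset.sum_congr rfl fun x _ => by ring

lemma Q_compl (ψ : (Fin 4 → Fin 2) → ℂ) (T : Finset (Fin 4)) : Q ψ Tᶜ = Q ψ T := by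
  simp only [Q, mg_compl]
  exact Finset.sum_congr rfl fun v _ => Finset.sum_congr rfl fun x _ => by ring

lemma Q1eq (ψ : (Fin 4 → Fin 2) → ℂ) {i j : Fin 4} (hij : i ≠ j) :
    ∑ a : Fin 2, ∑ b : Fin 2,
      (∑ c, redMat ψ i j (a, c) (b, c)) * (∑ c, redMat ψ i j (b, c) (a, c)) = Q ψ {i} := by
  have hupd : ∀ (v : Fin 4 → Fin 2) (b : Fin 2),
      Function.update (Function.update v i b) j (v j) = Function.update v i b := by
    intro v b
    have h := (Function.update_of_ne hij.symm b v)
    rw [show v j = (Function.update v i b) j from h.symm, Function.update_eq_self]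
  have hσ : ∀ a b : Fin 2, (∑ c, redMat ψ i j (a, c) (b, c))
      = ∑ v, if v i = a then ψ v * (starRingEnd ℂ) (ψ (Function.update v i b)) else 0 := by
    intro a b
    simp only [redMat]
    rw [Finset.sum_comm]
    refine Finset.sum_congr rfl fun v _ => ?_
    by_cases hva : v i = a
    · simp only [hva, true_and, if_true]
      rw [Finset.sum_eq_single (v j)]
      · rw [if_pos rfl, hupd]
      · intro c _ hc; rw [if_neg (fun h => hc h.symm)]
      · intro h; exact absurd (mem_univ _) h
    · simp [hva]
  simp only [hσ, Finset.sum_mul_sum]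
  -- reorder sums: a b v x → v x a b
  conv_lhs => enter [2, a]; rw [Finset.sum_comm]
  rw [Finset.sum_comm]
  conv_lhs => enter [2, v, 2, a]; rw [Finset.sum_comm]
  conv_lhs => enter [2, v]; rw [Finset.sum_comm]
  simp only [Q, mg_singleton]
  refine Finset.sum_congr rfl fun v _ => Finset.sum_congr rfl fun x _ => ?_
  rw [Finset.sum_eq_single (v i)]
  · rw [Finset.sum_eq_single (x i)]
    · rw [if_pos rfl, if_pos rfl]; ring
    · intro b _ hb; rw [if_neg (fun h : x i = b => hb h.symm), mul_zero]
    · intro h; exact absurd (mem_univ _) h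
  · intro a _ ha
    apply Finset.sum_eq_zero
    intro b _
    rw [if_neg (fun h : v i = a => ha h.symm), zero_mul]
  · intro h; exact absurd (mem_univ _) h

lemma Q2eq (ψ : (Fin 4 → Fin 2) → ℂ) {i j : Fin 4} (hij : i ≠ j) :
    ∑ p : Fin 2 × Fin 2, ∑ q : Fin 2 × Fin 2,
      redMat ψ i j p q * redMat ψ i j q p = Q ψ {i, j} := by
  simp only [redMat, Finset.sum_mul_sum]
  -- reorder sums: p q v x → v x p q
  conv_lhs => enter [2, p]; rw [Finset.sum_comm]
  rw [Finset.sum_comm]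
  conv_lhs => enter [2, v, 2, p]; rw [Finset.sum_comm]
  conv_lhs => enter [2, v]; rw [Finset.sum_comm]
  simp only [Q, mg_pair hij]
  refine Finset.sum_congr rfl fun v _ => Finset.sum_congr rfl fun x _ => ?_
  rw [Finset.sum_eq_single ((v i, v j))]
  · rw [Finset.sum_eq_single ((x i, x j))]
    · rw [if_pos ⟨rfl, rfl⟩, if_pos ⟨rfl, rfl⟩]; ring
    · intro q _ hq
      have : ¬(x i = q.1 ∧ x j = q.2) := by
        rintro ⟨h1, h2⟩; exact hq (by rw [Prod.ext_iff]; exact ⟨h1.symm, h2.symm⟩)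
      rw [if_neg this, mul_zero]
    · intro h; exact absurd (mem_univ _) h
  · intro p _ hp
    apply Finset.sum_eq_zero
    intro q _
    have : ¬(v i = p.1 ∧ v j = p.2) := by
      rintro ⟨h1, h2⟩; exact hp (by rw [Prod.ext_iff]; exact ⟨h1.symm, h2.symm⟩)
    rw [if_neg this, zero_mul]
  · intro h; exact absurd (mem_univ _) h

end AME4

/-- There is no 4-qubit perfect tensor (absolutely maximally entangled state). -/
theorem stmt_8 :
    ¬ ∃ ψ : (Fin 4 → Fin 2) → ℂ,
      (∑ v, ‖ψ v‖ ^ 2 = 1) ∧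
      ∀ i j : Fin 4, i ≠ j →
        redMat ψ i j = ((4 : ℂ))⁻¹ • (1 : Matrix (Fin 2 × Fin 2) (Fin 2 × Fin 2) ℂ) := by
  rintro ⟨ψ, hnorm, hred⟩
  open AME4 Finset in
  -- value of Q on pairs
  have hQ2 : ∀ i j : Fin 4, i ≠ j → Q ψ {i, j} = 4⁻¹ := by
    intro i j hij
    have h := Q2eq ψ hij
    rw [hred i j hij] at h
    rw [← h]
    simp only [Matrix.smul_apply, Matrix.one_apply, smul_eq_mul, mul_ite, mul_one, mul_zero,
      ite_mul, zero_mul]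
    simp [Finset.sum_ite_eq', Finset.card_univ]
  have hQ1 : ∀ i : Fin 4, Q ψ {i} = 2⁻¹ := by
    intro i
    have hij : i ≠ i + 1 := by
      have h4 := i.is_lt
      intro hcon
      rw [Fin.ext_iff, Fin.val_add, Fin.val_one] at hcon
      omega
    have h := Q1eq ψ hij
    rw [hred i (i + 1) hij] at h
    rw [← h]
    simp only [Matrix.smul_apply, Matrix.one_apply, smul_eq_mul]
    have hone : ∀ a b c c' : Fin 2, ((a, c) = (b, c')) = (a = b ∧ c = c') := by
      intro a b c c'; simp [Prod.ext_iff]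
    simp only [hone]
    simp only [eq_self_iff_true, and_true, mul_ite, mul_one, mul_zero]
    simp [Finset.sum_ite_eq', Finset.card_univ]
    norm_num
  -- value of Q on all subsets
  have hc4 : Fintype.card (Fin 4) = 4 := by simp
  have hQall : ∀ T : Finset (Fin 4),
      Q ψ T = (if T.card = 0 ∨ T.card = 4 then 1 else if T.card = 2 then 4⁻¹ else 2⁻¹) := by
    intro T
    have hT4 : T.card ≤ 4 := by
      have := Finset.card_le_univ T
      rwa [hc4] at this
    have hcases : T.card = 0 ∨ T.card = 1 ∨ T.card = 2 ∨ T.card = 3 ∨ T.card = 4 := by omega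
    rcases hcases with h | h | h | h | h <;> rw [h]
    · rw [Finset.card_eq_zero.mp h]
      simpa using Q_empty ψ hnorm
    · obtain ⟨i, rfl⟩ := Finset.card_eq_one.mp h
      simpa using hQ1 i
    · obtain ⟨i, j, hij, rfl⟩ := Finset.card_eq_two.mp h
      simpa using hQ2 i j hij
    · have hcc : Tᶜ.card = 1 := by
        rw [Finset.card_compl, hc4, h]
      obtain ⟨i, hi⟩ := Finset.card_eq_one.mp hcc
      have hQT : Q ψ T = Q ψ {i} := by
        conv_lhs => rw [← compl_compl T, hi]
        exact Q_compl ψ {i}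
      rw [hQT]
      simpa using hQ1 i
    · have : T = Finset.univ := Finset.eq_univ_of_card T (by rw [h, hc4])
      rw [this, Q_univ ψ]
      simpa using Q_empty ψ hnorm
  -- alternating sum
  have hsum : ∑ T : Finset (Fin 4), (-1 : ℂ) ^ T.card * Q ψ T = -2⁻¹ := by
    rw [Finset.sum_congr rfl fun T _ => by rw [hQall T]]
    rw [← Finset.powerset_univ, Finset.sum_powerset]
    rw [Finset.sum_congr rfl fun j _ => Finset.sum_powersetCard j univ
      (fun n => (-1 : ℂ) ^ n * if n = 0 ∨ n = 4 then 1 else if n = 2 then 4⁻¹ else 2⁻¹)]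
    rw [Finset.card_univ, hc4]
    simp only [Finset.sum_range_succ, Finset.sum_range_zero]
    norm_num [Nat.choose]
  -- conclusion
  have hfin := key_identity ψ
  rw [hsum, Complex.mul_conj] at hfin
  have hre : Complex.normSq (S ψ) = -2⁻¹ := by
    have := congrArg Complex.re hfin
    simpa using this.symm
  nlinarith [Complex.normSq_nonneg (S ψ)]
end

section
/- Let q > 2 be a prime power, α ∈ 𝔽_q \ {0,1}, and let C ⊆ 𝔽_q⁴ be the code generated by (1,0,1,1) and (0,1,1,α). Define ψ ∈ (ℂ^q)^{⊗4} by ψ = (1/q) ∑_{c ∈ C} |c₁,c₂,c₃,c₄⟩. Then ψ is a unit vector and for every pair of coordinates {i,j} ⊂ {1,2,3,4}, the reduced density matrix of ψ on factors {i,j} equals (1/q²)·I. -/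
open Classical in
/-- The uniform superposition `(1/q) ∑_{c ∈ C} |c⟩` over the code generated by
`(1,0,1,1)` and `(0,1,1,α)`. -/
noncomputable def codeState (F : Type*) [Field F] [Fintype F] (α : F) :
    (Fin 4 → F) → ℂ :=
  fun v => if ∃ x y : F, v = fun i => x * (![1, 0, 1, 1] i) + y * (![0, 1, 1, α] i)
    then ((Fintype.card F : ℂ))⁻¹ else 0

/-- The codeword with message `(x, y)`. -/
def cw {F : Type*} [Field F] (α x y : F) : Fin 4 → F :=
  fun i => x * (![1, 0, 1, 1] i) + y * (![0, 1, 1, α] i)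

open Classical in
theorem codeState_apply {F : Type*} [Field F] [Fintype F] (α : F) (v : Fin 4 → F) :
    codeState F α v
      = if ∃ x y : F, v = cw α x y then ((Fintype.card F : ℂ))⁻¹ else 0 := by
  simp only [codeState]; rfl

theorem cw_inj {F : Type*} [Field F] {α : F} (hα0 : α ≠ 0) (hα1 : α ≠ 1)
    (i j : Fin 4) (hij : i ≠ j)
    {x y x' y' : F} (h1 : cw α x y i = cw α x' y' i) (h2 : cw α x y j = cw α x' y' j) :
    x = x' ∧ y = y' := by
  fin_cases i <;> fin_cases j <;> simp [cw] at h1 h2 ⊢ <;>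
  first
  | exact absurd rfl hij
  | exact ⟨h1, h2⟩
  | exact ⟨h2, h1⟩
  | exact ⟨h1, by linear_combination h2 - h1⟩
  | exact ⟨h2, by linear_combination h1 - h2⟩
  | exact ⟨by linear_combination h2 - h1, h1⟩
  | exact ⟨by linear_combination h1 - h2, h2⟩
  | exact ⟨h1, mul_right_cancel₀ hα0 (show y * α = y' * α by linear_combination h2 - h1)⟩
  | exact ⟨h2, mul_right_cancel₀ hα0 (show y * α = y' * α by linear_combination h1 - h2)⟩
  | exact ⟨by linear_combination h2 - α * h1, h1⟩
  | exact ⟨by linear_combination h1 - α * h2, h2⟩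
  | (have hy : y = y' := mul_right_cancel₀ (sub_ne_zero.mpr hα1)
      (show y * (α - 1) = y' * (α - 1) by linear_combination h2 - h1)
     exact ⟨by linear_combination h1 - hy, hy⟩)
  | (have hy : y = y' := mul_right_cancel₀ (sub_ne_zero.mpr hα1)
      (show y * (α - 1) = y' * (α - 1) by linear_combination h1 - h2)
     exact ⟨by linear_combination h2 - hy, hy⟩)

theorem cw_surj {F : Type*} [Field F] [Fintype F] {α : F} (hα0 : α ≠ 0) (hα1 : α ≠ 1)
    (i j : Fin 4) (hij : i ≠ j) (a b : F) :
    ∃ x y : F, cw α x y i = a ∧ cw α x y j = b := by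
  have hinj : Function.Injective
      (fun xy : F × F => (cw α xy.1 xy.2 i, cw α xy.1 xy.2 j)) := by
    rintro ⟨x, y⟩ ⟨x', y'⟩ h
    simp only [Prod.mk.injEq] at h ⊢
    exact cw_inj hα0 hα1 i j hij h.1 h.2
  obtain ⟨⟨x, y⟩, h⟩ := (Finite.injective_iff_surjective.mp hinj) (a, b)
  simp only [Prod.mk.injEq] at h
  exact ⟨x, y, h.1, h.2⟩

theorem exists_kl : ∀ i j : Fin 4, i ≠ j →
    ∃ k l : Fin 4, k ≠ l ∧ k ≠ i ∧ k ≠ j ∧ l ≠ i ∧ l ≠ j := by decide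

theorem stmt_10 (F : Type*) [Field F] [Fintype F] [DecidableEq F]
    (hq : 2 < Fintype.card F) (α : F) (hα0 : α ≠ 0) (hα1 : α ≠ 1) :
    (∑ v, ‖codeState F α v‖ ^ 2 = 1) ∧
    ∀ i j : Fin 4, i ≠ j →
      redMat (codeState F α) i j
        = (((Fintype.card F : ℂ)) ^ 2)⁻¹ • (1 : Matrix (F × F) (F × F) ℂ) := by
  classical
  have hcard0 : (Fintype.card F : ℝ) ≠ 0 := by positivity
  have hinj : Function.Injective (fun xy : F × F => cw α xy.1 xy.2) := by
    rintro ⟨x, y⟩ ⟨x', y'⟩ h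
    have h01 := cw_inj hα0 hα1 0 1 (by decide) (congrFun h 0) (congrFun h 1)
    simpa [Prod.mk.injEq] using h01
  constructor
  · -- norm
    have hterm : ∀ v : Fin 4 → F, ‖codeState F α v‖ ^ 2
        = if ∃ x y : F, v = cw α x y then ((Fintype.card F : ℝ))⁻¹ ^ 2 else 0 := by
      intro v
      rw [codeState_apply]
      by_cases h : ∃ x y : F, v = cw α x y
      · rw [if_pos h, if_pos h, norm_inv, Complex.norm_natCast]
      · rw [if_neg h, if_neg h]; simp
    simp only [hterm]
    rw [← Finset.sum_filter, Finset.sum_const]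
    have himg : Finset.univ.filter (fun v => ∃ x y : F, v = cw α x y)
        = Finset.image (fun xy : F × F => cw α xy.1 xy.2) Finset.univ := by
      ext v
      simp only [Finset.mem_filter, Finset.mem_univ, true_and, Finset.mem_image,
        Prod.exists]
      constructor
      · rintro ⟨x, y, rfl⟩; exact ⟨x, y, rfl⟩
      · rintro ⟨x, y, rfl⟩; exact ⟨x, y, rfl⟩
    rw [himg, Finset.card_image_of_injective _ hinj, Finset.card_univ,
      Fintype.card_prod, nsmul_eq_mul, Nat.cast_mul]
    field_simp
  · intro i j hij
    ext p q
    obtain ⟨x₀, y₀, hv₀i, hv₀j⟩ := cw_surj hα0 hα1 i j hij p.1 p.2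
    have key : ∀ v : Fin 4 → F,
        (if v i = p.1 ∧ v j = p.2 then
          codeState F α v * (starRingEnd ℂ)
            (codeState F α (Function.update (Function.update v i q.1) j q.2))
        else 0)
        = if v = cw α x₀ y₀ ∧ q = p then
            ((Fintype.card F : ℂ))⁻¹ * (starRingEnd ℂ) ((Fintype.card F : ℂ))⁻¹ else 0 := by
      intro v
      by_cases hv : v i = p.1 ∧ v j = p.2
      · rw [if_pos hv]
        by_cases hC : ∃ x y : F, v = cw α x y
        · obtain ⟨x, y, rfl⟩ := hC
          obtain ⟨hx, hy⟩ := cw_inj hα0 hα1 i j hij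
            (hv.1.trans hv₀i.symm) (hv.2.trans hv₀j.symm)
          have hveq : cw α x y = cw α x₀ y₀ := by rw [hx, hy]
          rw [hveq]
          by_cases hqp : q = p
          · have hupd : Function.update (Function.update (cw α x₀ y₀) i q.1) j q.2
                = cw α x₀ y₀ := by
              funext k
              by_cases hk : k = j
              · subst hk
                rw [Function.update_self, hqp, ← hv₀j]
              · rw [Function.update_of_ne hk]
                by_cases hk' : k = i
                · subst hk'
                  rw [Function.update_self, hqp, ← hv₀i]
                · rw [Function.update_of_ne hk']
            rw [hupd, if_pos ⟨rfl, hqp⟩, codeState_apply, if_pos ⟨x₀, y₀, rfl⟩]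
          · have hnot : ¬ ∃ x y : F,
                Function.update (Function.update (cw α x₀ y₀) i q.1) j q.2 = cw α x y := by
              rintro ⟨x, y, hxy⟩
              obtain ⟨k, l, hkl, hki, hkj, hli, hlj⟩ := exists_kl i j hij
              have hk : Function.update (Function.update (cw α x₀ y₀) i q.1) j q.2 k
                  = cw α x₀ y₀ k := by
                rw [Function.update_of_ne hkj, Function.update_of_ne hki]
              have hl : Function.update (Function.update (cw α x₀ y₀) i q.1) j q.2 l
                  = cw α x₀ y₀ l := by
                rw [Function.update_of_ne hlj, Function.update_of_ne hli]
              obtain ⟨hx, hy⟩ := cw_inj hα0 hα1 k l hkl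
                (show cw α x y k = cw α x₀ y₀ k by rw [← hxy]; exact hk)
                (show cw α x y l = cw α x₀ y₀ l by rw [← hxy]; exact hl)
              have hv' : Function.update (Function.update (cw α x₀ y₀) i q.1) j q.2
                  = cw α x₀ y₀ := by
                rw [hxy, ← hx, ← hy]
              have hq1 : q.1 = p.1 := by
                have h' := congrFun hv' i
                rwa [Function.update_of_ne hij, Function.update_self, hv₀i] at h'
              have hq2 : q.2 = p.2 := by
                have h' := congrFun hv' j
                rwa [Function.update_self, hv₀j] at h'
              exact hqp (Prod.ext hq1 hq2)
            rw [codeState_apply (v := Function.update (Function.update (cw α x₀ y₀) i q.1) j q.2),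
              if_neg hnot, map_zero, mul_zero, if_neg (fun h => hqp h.2)]
        · rw [codeState_apply, if_neg hC, zero_mul,
            if_neg (fun h => hC ⟨x₀, y₀, h.1⟩)]
      · rw [if_neg hv, if_neg]
        rintro ⟨rfl, -⟩
        exact hv ⟨hv₀i, hv₀j⟩
    show (∑ v : Fin 4 → F,
        if v i = p.1 ∧ v j = p.2 then
          codeState F α v * (starRingEnd ℂ)
            (codeState F α (Function.update (Function.update v i q.1) j q.2))
        else 0) = _
    rw [Finset.sum_congr rfl (fun v _ => key v)]
    by_cases hqp : q = p
    · subst hqp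
      simp only [and_true]
      rw [Finset.sum_ite_eq' Finset.univ (cw α x₀ y₀) (fun _ =>
        ((Fintype.card F : ℂ))⁻¹ * (starRingEnd ℂ) ((Fintype.card F : ℂ))⁻¹),
        if_pos (Finset.mem_univ _)]
      rw [Matrix.smul_apply, Matrix.one_apply_eq, smul_eq_mul, mul_one,
        map_inv₀, map_natCast, sq, mul_inv]
    · rw [Finset.sum_eq_zero (fun v _ => if_neg (fun h => hqp h.2))]
      rw [Matrix.smul_apply, Matrix.one_apply_ne (fun h => hqp h.symm), smul_zero]
end
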